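/- Let C satisfy C 0 = 1, C 1 = 4, C n = 3 C(n-1) + 2 C(n-2), and E satisfy E 0 = 1, E 1 = 4, E n = 2 C(n-1) + E(n-2) + 2^(n-1). Then the full density tends to 0: Filter.Tendsto (fun m => (fun m => E (Nat.log 2 m + 1)) m / ((4:ℝ)^(Nat.log 2 m))) Filter.atTop (nhds 0); more precisely, for any sequence G m of ones-counts with G m ≤ E (⌊log₂ m⌋ + 1) and total cells F m ≥ 4^(⌊log₂ m⌋), G m / F m → 0 as m → ∞. -/

import Mathlib

def C : ℕ → ℕ
  | 0 => 1
  | 1 => 4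
  | n + 2 => 3 * C (n + 1) + 2 * C n

def E : ℕ → ℕ
  | 0 => 1
  | 1 => 4
  | n + 2 => 2 * C (n + 1) + E n + 2 ^ (n + 1)

lemma C_bound : ∀ n, 5 ^ n * C n ≤ 4 * 18 ^ n := by
  have key : ∀ n, 5 ^ n * C n ≤ 4 * 18 ^ n ∧ 5 ^ (n+1) * C (n+1) ≤ 4 * 18 ^ (n+1) := by
    intro n
    induction n with
    | zero => simp [C]
    | succ k ih =>
      refine ⟨ih.2, ?_⟩
      have h1 := ih.1
      have h2 := ih.2
      show 5 ^ (k + 2) * C (k + 2) ≤ 4 * 18 ^ (k + 2)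
      rw [show C (k + 2) = 3 * C (k + 1) + 2 * C k from rfl]
      have : 5 ^ (k + 2) * (3 * C (k + 1) + 2 * C k)
          = 15 * (5 ^ (k+1) * C (k+1)) + 50 * (5 ^ k * C k) := by ring
      rw [this]
      calc 15 * (5 ^ (k+1) * C (k+1)) + 50 * (5 ^ k * C k)
          ≤ 15 * (4 * 18 ^ (k+1)) + 50 * (4 * 18 ^ k) := by
            exact Nat.add_le_add (Nat.mul_le_mul_left _ h2) (Nat.mul_le_mul_left _ h1)
        _ ≤ 4 * 18 ^ (k + 2) := by ring_nf; nlinarith [pow_pos (by norm_num : 0 < 18) k]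
  exact fun n => (key n).1

lemma E_bound : ∀ n, 5 ^ n * E n ≤ 4 * 18 ^ n := by
  have key : ∀ n, 5 ^ n * E n ≤ 4 * 18 ^ n ∧ 5 ^ (n+1) * E (n+1) ≤ 4 * 18 ^ (n+1) := by
    intro n
    induction n with
    | zero => simp [E]
    | succ k ih =>
      refine ⟨ih.2, ?_⟩
      have h1 := ih.1
      have hC := C_bound (k + 1)
      show 5 ^ (k + 2) * E (k + 2) ≤ 4 * 18 ^ (k + 2)
      rw [show E (k + 2) = 2 * C (k + 1) + E k + 2 ^ (k + 1) from rfl]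
      have : 5 ^ (k + 2) * (2 * C (k + 1) + E k + 2 ^ (k+1))
          = 10 * (5 ^ (k+1) * C (k+1)) + 25 * (5 ^ k * E k) + 50 * 10 ^ k := by
        have h25 : (10:ℕ) ^ k = 2 ^ k * 5 ^ k := by rw [← Nat.mul_pow]
        rw [h25]; ring
      rw [this]
      have h10 : (10:ℕ) ^ k ≤ 18 ^ k := Nat.pow_le_pow_left (by norm_num) k
      calc 10 * (5 ^ (k+1) * C (k+1)) + 25 * (5 ^ k * E k) + 50 * 10 ^ k
          ≤ 10 * (4 * 18 ^ (k+1)) + 25 * (4 * 18 ^ k) + 50 * 18 ^ k := by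
            exact Nat.add_le_add (Nat.add_le_add (Nat.mul_le_mul_left _ hC)
              (Nat.mul_le_mul_left _ h1)) (Nat.mul_le_mul_left _ h10)
        _ ≤ 4 * 18 ^ (k + 2) := by ring_nf; nlinarith [pow_pos (by norm_num : 0 < 18) k]
  exact fun n => (key n).1

lemma density_le : ∀ n, (E (n + 1) : ℝ) / (4:ℝ) ^ n ≤ (72/5) * (9/10) ^ n := by
  intro n
  have h := E_bound (n + 1)
  have hR : ((5:ℝ)) ^ (n+1) * (E (n+1) : ℝ) ≤ 4 * 18 ^ (n+1) := by
    exact_mod_cast h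
  have h4 : (0:ℝ) < (4:ℝ) ^ n := by positivity
  rw [div_le_iff₀ h4]
  have h5 : (0:ℝ) < (5:ℝ) ^ (n+1) := by positivity
  have hE : (E (n+1) : ℝ) ≤ 4 * 18 ^ (n+1) / 5 ^ (n+1) := by
    rw [le_div_iff₀ h5]; linarith [hR]
  calc (E (n+1) : ℝ) ≤ 4 * 18 ^ (n+1) / 5 ^ (n+1) := hE
    _ = 72/5 * (9/10)^n * 4^n := by
        rw [div_eq_iff (ne_of_gt h5)]
        have : ((18:ℝ)) ^ (n+1) = (9/10 * 4 * 5 : ℝ) ^ (n+1) := by norm_num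
        rw [this, mul_pow, mul_pow]; ring
    _ ≤ 72/5 * (9/10)^n * 4^n := le_refl _

lemma log_tendsto : Filter.Tendsto (fun m => Nat.log 2 m) Filter.atTop Filter.atTop := by
  rw [Filter.tendsto_atTop]
  intro b
  rw [Filter.eventually_atTop]
  refine ⟨2 ^ b, fun m hm => ?_⟩
  have hm0 : m ≠ 0 := by
    have := Nat.one_le_two_pow (n := b); omega
  exact (Nat.le_log_iff_pow_le (by norm_num) hm0).mpr hm

lemma aux_tendsto :
    Filter.Tendsto (fun m => (72/5 : ℝ) * (9/10) ^ (Nat.log 2 m)) Filter.atTop (nhds 0) := by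
  have h : Filter.Tendsto (fun n : ℕ => (72/5 : ℝ) * (9/10) ^ n) Filter.atTop (nhds 0) := by
    have := tendsto_pow_atTop_nhds_zero_of_lt_one (by norm_num : (0:ℝ) ≤ 9/10)
      (by norm_num : (9/10:ℝ) < 1)
    simpa using this.const_mul (72/5 : ℝ)
  exact h.comp log_tendsto

lemma part1 : Filter.Tendsto (fun m => (E (Nat.log 2 m + 1) : ℝ) / (4 : ℝ) ^ (Nat.log 2 m))
    Filter.atTop (nhds 0) := by
  apply squeeze_zero (fun m => by positivity) (fun m => density_le (Nat.log 2 m)) aux_tendsto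

theorem full_density_tendsto_zero :
    Filter.Tendsto (fun m => (E (Nat.log 2 m + 1) : ℝ) / (4 : ℝ) ^ (Nat.log 2 m))
      Filter.atTop (nhds 0) ∧
    ∀ G F : ℕ → ℕ, (∀ m, G m ≤ E (Nat.log 2 m + 1)) → (∀ m, 4 ^ (Nat.log 2 m) ≤ F m) →
      Filter.Tendsto (fun m => (G m : ℝ) / (F m : ℝ)) Filter.atTop (nhds 0) := by
  constructor
  · exact part1
  · intro G F hG hF
    apply squeeze_zero (fun m => by positivity) (fun m => ?_) part1
    have hFpos : (0:ℝ) < F m := by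
      have : (1:ℕ) ≤ F m := le_trans (Nat.one_le_pow _ _ (by norm_num)) (hF m)
      exact_mod_cast this
    have h4pos : (0:ℝ) < (4:ℝ) ^ (Nat.log 2 m) := by positivity
    apply div_le_div₀ (by positivity) (by exact_mod_cast hG m) h4pos
    have := hF m
    calc ((4:ℝ)) ^ (Nat.log 2 m) = ((4 ^ (Nat.log 2 m) : ℕ) : ℝ) := by push_cast; ring
      _ ≤ (F m : ℝ) := by exact_mod_cast this
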